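/- Suppose there is an algorithm achieving a 1/(ℓ−ε) approximation for LCS on strings over alphabets of size ℓ. Then for strings A, B over an alphabet of size s > ℓ, taking the maximum over all ℓ-element subalphabets y of a 1/(ℓ−ε)-approximate LCS of the restrictions of A and B to y yields a common subsequence of A and B of length at least lcs(A,B)/(s(1 − ε/ℓ)). -/

import Mathlib

noncomputable def lcsLen {α : Type*} (X Y : List α) : ℕ :=
  sSup {n | ∃ C : List α, C.Sublist X ∧ C.Sublist Y ∧ C.length = n}

lemma lcsLen_bddAbove {α : Type*} (X Y : List α) :
    BddAbove {n | ∃ C : List α, C.Sublist X ∧ C.Sublist Y ∧ C.length = n} := by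
  refine ⟨X.length, fun n hn => ?_⟩
  obtain ⟨C, hCX, _, hlen⟩ := hn
  exact hlen ▸ hCX.length_le

lemma le_lcsLen {α : Type*} {X Y C : List α} (h1 : C.Sublist X) (h2 : C.Sublist Y) :
    C.length ≤ lcsLen X Y :=
  le_csSup (lcsLen_bddAbove X Y) ⟨C, h1, h2, rfl⟩

lemma lcsLen_spec {α : Type*} (X Y : List α) :
    ∃ C : List α, C.Sublist X ∧ C.Sublist Y ∧ C.length = lcsLen X Y :=
  Nat.sSup_mem (s := {n | ∃ C : List α, C.Sublist X ∧ C.Sublist Y ∧ C.length = n})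
    ⟨0, [], List.nil_sublist X, List.nil_sublist Y, rfl⟩ (lcsLen_bddAbove X Y)

lemma length_filter_mem_eq_sum_count {α : Type*} [DecidableEq α] (C : List α) (y : Finset α) :
    (C.filter (fun c => decide (c ∈ y))).length = ∑ a ∈ y, C.count a := by
  induction C with
  | nil => simp
  | cons c C ih =>
    rw [List.filter_cons]
    have hstep : ∑ a ∈ y, (c :: C).count a
        = (∑ a ∈ y, C.count a) + (if c ∈ y then 1 else 0) := by
      simp [List.count_cons, Finset.sum_add_distrib, Finset.sum_ite_eq']
    by_cases hc : c ∈ y <;> simp [hc, ih, hstep]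

lemma card_powersetCard_filter_mem {α : Type*} [DecidableEq α] {Sig : Finset α} {a : α}
    (ha : a ∈ Sig) {ℓ : ℕ} (hℓ : 1 ≤ ℓ) :
    ((Sig.powersetCard ℓ).filter (fun y => a ∈ y)).card = (Sig.card - 1).choose (ℓ - 1) := by
  rw [← Finset.card_erase_of_mem ha, ← Finset.card_powersetCard]
  refine Finset.card_bij' (fun y _ => y.erase a) (fun z _ => insert a z) ?_ ?_ ?_ ?_
  · intro y hy
    simp only [Finset.mem_filter, Finset.mem_powersetCard] at hy
    obtain ⟨⟨hsub, hcard⟩, hay⟩ := hy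
    rw [Finset.mem_powersetCard]
    exact ⟨Finset.erase_subset_erase a hsub, by rw [Finset.card_erase_of_mem hay, hcard]⟩
  · intro z hz
    rw [Finset.mem_powersetCard] at hz
    obtain ⟨hsub, hcardz⟩ := hz
    have haz : a ∉ z := fun h => (Finset.mem_erase.mp (hsub h)).1 rfl
    simp only [Finset.mem_filter, Finset.mem_powersetCard]
    refine ⟨⟨?_, ?_⟩, Finset.mem_insert_self a z⟩
    · exact Finset.insert_subset ha (hsub.trans (Finset.erase_subset a Sig))
    · rw [Finset.card_insert_of_notMem haz, hcardz]
      omega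
  · intro y hy
    simp only [Finset.mem_filter] at hy
    exact Finset.insert_erase hy.2
  · intro z hz
    rw [Finset.mem_powersetCard] at hz
    have haz : a ∉ z := fun h => (Finset.mem_erase.mp (hz.1 h)).1 rfl
    exact Finset.erase_insert haz

theorem subalphabet_approx_reduction {α : Type*} [DecidableEq α]
    (Sig : Finset α) (s ℓ : ℕ) (hcard : Sig.card = s) (hℓs : ℓ < s)
    (ε : ℝ) (hε : 0 < ε) (hεℓ : ε < ℓ)
    (A B : List α) (hA : ∀ c ∈ A, c ∈ Sig) (hB : ∀ c ∈ B, c ∈ Sig) :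
    ∃ y : Finset α, y ⊆ Sig ∧ y.card = ℓ ∧
      (lcsLen (A.filter (fun c => decide (c ∈ y)))
              (B.filter (fun c => decide (c ∈ y))) : ℝ) / ((ℓ : ℝ) - ε) ≥
        (lcsLen A B : ℝ) / ((s : ℝ) * (1 - ε / (ℓ : ℝ))) := by
  have hℓ1 : 1 ≤ ℓ := by
    by_contra h
    push_neg at h
    interval_cases ℓ
    · simp at hεℓ; linarith
  have hℓs' : ℓ ≤ s := le_of_lt hℓs
  obtain ⟨C, hCA, hCB, hClen⟩ := lcsLen_spec A B
  have hCSig : ∀ c ∈ C, c ∈ Sig := fun c hc => hA c (hCA.mem hc)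
  set P := Sig.powersetCard ℓ with hP
  have hsum : ∑ y ∈ P, (C.filter (fun c => decide (c ∈ y))).length
      = C.length * (s - 1).choose (ℓ - 1) := by
    have h1 : ∀ y ∈ P, (C.filter (fun c => decide (c ∈ y))).length = ∑ a ∈ Sig,
        (if a ∈ y then C.count a else 0) := by
      intro y hy
      rw [Finset.mem_powersetCard] at hy
      rw [length_filter_mem_eq_sum_count,
        Finset.sum_ite_mem, Finset.inter_comm, Finset.inter_eq_left.mpr hy.1]
    rw [Finset.sum_congr rfl h1, Finset.sum_comm]
    have h2 : ∀ a ∈ Sig, ∑ y ∈ P, (if a ∈ y then C.count a else 0)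
        = C.count a * (s - 1).choose (ℓ - 1) := by
      intro a ha
      rw [← Finset.sum_filter, Finset.sum_const, smul_eq_mul,
        card_powersetCard_filter_mem ha hℓ1, hcard, mul_comm]
    rw [Finset.sum_congr rfl h2, ← Finset.sum_mul]
    congr 1
    rw [← length_filter_mem_eq_sum_count C Sig]
    congr 1
    exact List.filter_eq_self.mpr (fun a ha => by simpa using hCSig a ha)
  have hchoose : ℓ * s.choose ℓ = s * (s - 1).choose (ℓ - 1) := by
    have h := Nat.add_one_mul_choose_eq (s - 1) (ℓ - 1)
    have h1 : s - 1 + 1 = s := by omega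
    have h2 : ℓ - 1 + 1 = ℓ := by omega
    rw [h1, h2] at h
    rw [mul_comm ℓ]
    exact h.symm
  have hPne : P.Nonempty := by
    rw [← Finset.card_pos, hP, Finset.card_powersetCard, hcard]
    exact Nat.choose_pos hℓs'
  have hpigeon : ∃ y ∈ P, C.length * ℓ ≤ (C.filter (fun c => decide (c ∈ y))).length * s := by
    apply Finset.exists_le_of_sum_le hPne
    apply le_of_eq
    have h3 : ∑ y ∈ P, (C.filter (fun c => decide (c ∈ y))).length * s
        = C.length * (s - 1).choose (ℓ - 1) * s := by
      rw [← Finset.sum_mul, hsum]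
    rw [h3, Finset.sum_const, hP, Finset.card_powersetCard, hcard, smul_eq_mul]
    calc s.choose ℓ * (C.length * ℓ) = C.length * (ℓ * s.choose ℓ) := by ring
      _ = C.length * (s * (s - 1).choose (ℓ - 1)) := by rw [hchoose]
      _ = C.length * (s - 1).choose (ℓ - 1) * s := by ring
  obtain ⟨y, hyP, hylen⟩ := hpigeon
  rw [hP, Finset.mem_powersetCard] at hyP
  refine ⟨y, hyP.1, hyP.2, ?_⟩
  have hV : (C.filter (fun c => decide (c ∈ y))).length ≤
      lcsLen (A.filter (fun c => decide (c ∈ y))) (B.filter (fun c => decide (c ∈ y))) :=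
    le_lcsLen (hCA.filter _) (hCB.filter _)
  have hkeyN : lcsLen A B * ℓ ≤
      lcsLen (A.filter (fun c => decide (c ∈ y))) (B.filter (fun c => decide (c ∈ y))) * s := by
    calc lcsLen A B * ℓ = C.length * ℓ := by rw [hClen]
      _ ≤ (C.filter (fun c => decide (c ∈ y))).length * s := hylen
      _ ≤ _ := Nat.mul_le_mul_right _ hV
  have hkey : (lcsLen A B : ℝ) * ℓ ≤
      (lcsLen (A.filter (fun c => decide (c ∈ y)))
        (B.filter (fun c => decide (c ∈ y))) : ℝ) * s := by
    exact_mod_cast hkeyN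
  have hℓ0 : (0:ℝ) < ℓ := by exact_mod_cast hℓ1
  have hs0 : (0:ℝ) < s := by
    have : (ℓ:ℝ) < s := by exact_mod_cast hℓs
    linarith
  have hℓε : (0:ℝ) < (ℓ:ℝ) - ε := by linarith
  have hden : (0:ℝ) < (s:ℝ) * (1 - ε / ℓ) := by
    apply mul_pos hs0
    rw [sub_pos, div_lt_one hℓ0]
    exact hεℓ
  rw [ge_iff_le, div_le_div_iff₀ hden hℓε]
  rw [← mul_le_mul_iff_of_pos_right hℓ0]
  have hexp : (s:ℝ) * (1 - ε / ℓ) * (ℓ:ℝ) = (s:ℝ) * ((ℓ:ℝ) - ε) := by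
    field_simp
  set V : ℝ := (lcsLen (A.filter (fun c => decide (c ∈ y)))
      (B.filter (fun c => decide (c ∈ y))) : ℝ) with hVdef
  set L : ℝ := (lcsLen A B : ℝ) with hLdef
  calc L * ((ℓ:ℝ) - ε) * ℓ = (L * ℓ) * ((ℓ:ℝ) - ε) := by ring
    _ ≤ (V * s) * ((ℓ:ℝ) - ε) := mul_le_mul_of_nonneg_right hkey (le_of_lt hℓε)
    _ = V * ((s:ℝ) * ((ℓ:ℝ) - ε)) := by ring
    _ = V * ((s:ℝ) * (1 - ε / ℓ) * ℓ) := by rw [hexp]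
    _ = V * ((s:ℝ) * (1 - ε / ℓ)) * ℓ := by ring
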